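/- Let W : Fin N → ℝ be positive weights, ℓ : Fin N → ℝ nonnegative, and η' > 0. Then (∑ i, W i * exp(-η' * ℓ i)) / (∑ i, W i) ≤ exp(-η' * ∑ i, p i * ℓ i + (η'^2 / 2) * ∑ i, p i * (ℓ i)^2), where p i = W i / (∑ k, W k). -/

import Mathlib

lemma exp_neg_le_quad (x : ℝ) (hx : 0 ≤ x) : Real.exp (-x) ≤ 1 - x + x ^ 2 / 2 := by
  set g : ℝ → ℝ := fun y => 1 - y + y ^ 2 / 2 - Real.exp (-y) with hg
  have hmono : MonotoneOn g (Set.Ici (0:ℝ)) := by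
    apply monotoneOn_of_deriv_nonneg (convex_Ici 0)
    · fun_prop
    · intro y _
      apply DifferentiableAt.differentiableWithinAt
      fun_prop
    · intro y hy
      rw [interior_Ici] at hy
      have hd : HasDerivAt g (-1 + y + Real.exp (-y)) y := by
        have h1 : HasDerivAt (fun y : ℝ => Real.exp (-y)) (-Real.exp (-y)) y := by
          simpa [Function.comp_def] using (Real.hasDerivAt_exp (-y)).comp y (hasDerivAt_neg y)
        have h2 : HasDerivAt (fun y : ℝ => 1 - y + y ^ 2 / 2) (-1 + y) y := by
          have := ((hasDerivAt_id y).const_sub 1).add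
            (((hasDerivAt_pow 2 y)).div_const 2)
          simpa [mul_comm, Pi.add_def] using this
        simpa [g, sub_eq_add_neg, Pi.add_def, Pi.neg_def] using h2.add h1.neg
      rw [hd.deriv]
      have := Real.add_one_le_exp (-y)
      linarith
  have h0 : g 0 ≤ g x := hmono (by simp) hx hx
  simp [g] at h0
  linarith

theorem potential_one_step_bound (N : ℕ) (W ℓ : Fin N → ℝ) (η' : ℝ)
    (hη : 0 < η') (hW : ∀ i, 0 < W i) (hℓ : ∀ i, 0 ≤ ℓ i)
    (p : Fin N → ℝ) (hp : ∀ i, p i = W i / ∑ k, W k) :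
    (∑ i, W i * Real.exp (-η' * ℓ i)) / (∑ i, W i) ≤
      Real.exp (-η' * ∑ i, p i * ℓ i + (η' ^ 2 / 2) * ∑ i, p i * (ℓ i) ^ 2) := by
  rcases Nat.eq_zero_or_pos N with hN | hN
  · subst hN
    simp [Real.exp_pos]
  have hS : 0 < ∑ k, W k := Finset.sum_pos (fun i _ => hW i) (by
    simpa [Finset.univ_nonempty_iff] using Fin.pos_iff_nonempty.mp hN)
  have hpsum : ∑ i, p i = 1 := by
    simp only [hp, ← Finset.sum_div]
    field_simp
  have hlhs : (∑ i, W i * Real.exp (-η' * ℓ i)) / (∑ i, W i)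
      = ∑ i, p i * Real.exp (-η' * ℓ i) := by
    rw [Finset.sum_div]
    apply Finset.sum_congr rfl
    intro i _
    rw [hp]
    ring
  rw [hlhs]
  have step1 : ∑ i, p i * Real.exp (-η' * ℓ i)
      ≤ 1 + (-η' * ∑ i, p i * ℓ i + (η' ^ 2 / 2) * ∑ i, p i * (ℓ i) ^ 2) := by
    have : ∑ i, p i * Real.exp (-η' * ℓ i)
        ≤ ∑ i, p i * (1 - η' * ℓ i + (η' * ℓ i) ^ 2 / 2) := by
      apply Finset.sum_le_sum
      intro i _
      have hpi : 0 ≤ p i := by rw [hp]; exact div_nonneg (hW i).le hS.le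
      have h := exp_neg_le_quad (η' * ℓ i) (mul_nonneg hη.le (hℓ i))
      calc p i * Real.exp (-η' * ℓ i) = p i * Real.exp (-(η' * ℓ i)) := by ring_nf
        _ ≤ p i * (1 - η' * ℓ i + (η' * ℓ i) ^ 2 / 2) := by
            exact mul_le_mul_of_nonneg_left h hpi
    refine this.trans ?_
    have expand : ∑ i, p i * (1 - η' * ℓ i + (η' * ℓ i) ^ 2 / 2)
        = (∑ i, p i) - η' * ∑ i, p i * ℓ i + (η' ^ 2 / 2) * ∑ i, p i * (ℓ i) ^ 2 := by
      rw [Finset.mul_sum, Finset.mul_sum, ← Finset.sum_sub_distrib, ← Finset.sum_add_distrib]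
      apply Finset.sum_congr rfl
      intro i _
      ring
    rw [expand, hpsum]
    apply le_of_eq; ring
  refine step1.trans ?_
  have := Real.add_one_le_exp (-η' * ∑ i, p i * ℓ i + (η' ^ 2 / 2) * ∑ i, p i * (ℓ i) ^ 2)
  linarith
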